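/- (No strategy-scoring pair beats mutual information) Let X, Y be finite sets, P a joint distribution on X×Y with full-support marginals P_X, P_Y, and Φ:[0,∞)→ℝ continuous convex with Φ(1)=0. For any functions (strategies) θ_A : X→Δ(X), θ_B : Y→Δ(Y), and any scoring function K : X×Y→ℝ taking values in dom(Φ*), the ex-ante payment u_A = Σ_{x,y}P(x,y) Σ_{x̂,ŷ} θ_A(x,x̂)θ_B(y,ŷ)K(x̂,ŷ) − Σ_{x,y}P_X(x)P_Y(y) Σ_{x̂,ŷ} θ_A(x,x̂)θ_B(y,ŷ)Φ*(K(x̂,ŷ)) satisfies u_A ≤ D_Φ(P ‖ P_X⊗P_Y). -/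

import Mathlib

open scoped BigOperators

/-- The set whose supremum defines the convex conjugate of `Φ` (with domain `[0,∞)`). -/
def conjSet (Φ : ℝ → ℝ) (b : ℝ) : Set ℝ := {y | ∃ a : ℝ, 0 ≤ a ∧ y = a * b - Φ a}

/-- Convex conjugate `Φ*` of `Φ : [0,∞) → ℝ`. -/
noncomputable def conj (Φ : ℝ → ℝ) (b : ℝ) : ℝ := sSup (conjSet Φ b)

/-- The (effective) domain of the conjugate `Φ*`. -/
def domStar (Φ : ℝ → ℝ) : Set ℝ := {b | BddAbove (conjSet Φ b)}

/-- `b` is a subgradient of `Φ : [0,∞) → ℝ` at `a`. -/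
def IsSubgradAt (Φ : ℝ → ℝ) (a b : ℝ) : Prop := ∀ c, 0 ≤ c → Φ a + b * (c - a) ≤ Φ c

/-- Marginal on the first coordinate of a joint distribution `P` on `X × Y`. -/
noncomputable def margX {X Y : Type*} [Fintype Y] (P : X → Y → ℝ) (x : X) : ℝ := ∑ y, P x y

/-- Marginal on the second coordinate. -/
noncomputable def margY {X Y : Type*} [Fintype X] (P : X → Y → ℝ) (y : Y) : ℝ := ∑ x, P x y

/-- Point-wise ratio `P(x,y) / (P_X(x) P_Y(y))`. -/
noncomputable def ratio {X Y : Type*} [Fintype X] [Fintype Y] (P : X → Y → ℝ) (x : X) (y : Y) : ℝ :=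
  P x y / (margX P x * margY P y)

/-- Φ-mutual information `D_Φ(P ‖ P_X ⊗ P_Y)` of a joint distribution on a finite space. -/
noncomputable def phiMI {X Y : Type*} [Fintype X] [Fintype Y] (Φ : ℝ → ℝ) (P : X → Y → ℝ) : ℝ :=
  ∑ x, ∑ y, margX P x * margY P y * Φ (ratio P x y)

/-- Ex-ante truth-telling payment of the Φ-pairing mechanism with scoring function `K`. -/
noncomputable def payoff {X Y : Type*} [Fintype X] [Fintype Y]
    (Φ : ℝ → ℝ) (P : X → Y → ℝ) (K : X → Y → ℝ) : ℝ :=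
  (∑ x, ∑ y, P x y * K x y) - ∑ x, ∑ y, margX P x * margY P y * conj Φ (K x y)

/-- Ex-ante payment to Alice in the Φ-pairing mechanism under strategies `θA, θB`. -/
noncomputable def uA {X Y : Type*} [Fintype X] [Fintype Y]
    (Φ : ℝ → ℝ) (P : X → Y → ℝ) (θA : X → X → ℝ) (θB : Y → Y → ℝ) (K : X → Y → ℝ) : ℝ :=
  (∑ x, ∑ y, P x y * ∑ x', ∑ y', θA x x' * θB y y' * K x' y') -
    ∑ x, ∑ y, margX P x * margY P y * ∑ x', ∑ y', θA x x' * θB y y' * conj Φ (K x' y')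

/-- Stochastic relevance: distinct signals induce distinct posteriors, for both agents. -/
def StochRelevant {X Y : Type*} [Fintype X] [Fintype Y] (P : X → Y → ℝ) : Prop :=
  (∀ x x' : X, x ≠ x' → ∃ y, P x y / margX P x ≠ P x' y / margX P x') ∧
  (∀ y y' : Y, y ≠ y' → ∃ x, P x y / margY P y ≠ P x y' / margY P y')

/-- No strategy profile and scoring function can beat the Φ-mutual information. -/
theorem no_strategy_beats_MI {X Y : Type*} [Fintype X] [Fintype Y]
    (Φ : ℝ → ℝ) (hconv : ConvexOn ℝ (Set.Ici 0) Φ)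
    (hcont : ContinuousOn Φ (Set.Ici 0)) (hΦ1 : Φ 1 = 0)
    (P : X → Y → ℝ) (hP0 : ∀ x y, 0 ≤ P x y) (hP1 : ∑ x, ∑ y, P x y = 1)
    (hPX : ∀ x, 0 < margX P x) (hPY : ∀ y, 0 < margY P y)
    (θA : X → X → ℝ) (hθA0 : ∀ x x', 0 ≤ θA x x') (hθA1 : ∀ x, ∑ x', θA x x' = 1)
    (θB : Y → Y → ℝ) (hθB0 : ∀ y y', 0 ≤ θB y y') (hθB1 : ∀ y, ∑ y', θB y y' = 1)
    (K : X → Y → ℝ) (hK : ∀ x y, K x y ∈ domStar Φ) :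
    uA Φ P θA θB K ≤ phiMI Φ P := by
  -- rewrite uA as one big quadruple sum
  have huA : uA Φ P θA θB K
      = ∑ x, ∑ y, ∑ x', ∑ y', θA x x' * θB y y' *
        (P x y * K x' y' - margX P x * margY P y * conj Φ (K x' y')) := by
    unfold uA
    rw [← Finset.sum_sub_distrib]
    refine Finset.sum_congr rfl fun x _ => ?_
    rw [← Finset.sum_sub_distrib]
    refine Finset.sum_congr rfl fun y _ => ?_
    rw [Finset.mul_sum, Finset.mul_sum, ← Finset.sum_sub_distrib]
    refine Finset.sum_congr rfl fun x' _ => ?_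
    rw [Finset.mul_sum, Finset.mul_sum, ← Finset.sum_sub_distrib]
    exact Finset.sum_congr rfl fun y' _ => by ring
  have hsum : ∀ (x : X) (y : Y) (c : ℝ),
      (∑ x', ∑ y', θA x x' * θB y y' * c) = c := by
    intro x y c
    calc ∑ x', ∑ y', θA x x' * θB y y' * c
        = ∑ x', θA x x' * ∑ y', θB y y' * c := by
          refine Finset.sum_congr rfl fun x' _ => ?_
          rw [Finset.mul_sum]; exact Finset.sum_congr rfl fun y' _ => by ring
      _ = ∑ x', θA x x' * c := by
          refine Finset.sum_congr rfl fun x' _ => ?_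
          rw [← Finset.sum_mul, hθB1 y, one_mul]
      _ = c := by rw [← Finset.sum_mul, hθA1 x, one_mul]
  have hrhs : phiMI Φ P = ∑ x, ∑ y, ∑ x', ∑ y', θA x x' * θB y y' *
        (margX P x * margY P y * Φ (ratio P x y)) := by
    unfold phiMI
    exact Finset.sum_congr rfl fun x _ => Finset.sum_congr rfl fun y _ =>
      (hsum x y _).symm
  rw [huA, hrhs]
  refine Finset.sum_le_sum fun x _ => Finset.sum_le_sum fun y _ =>
    Finset.sum_le_sum fun x' _ => Finset.sum_le_sum fun y' _ => ?_
  refine mul_le_mul_of_nonneg_left ?_ (mul_nonneg (hθA0 x x') (hθB0 y y'))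
  have hd : 0 < margX P x * margY P y := mul_pos (hPX x) (hPY y)
  have hr : 0 ≤ ratio P x y := div_nonneg (hP0 x y) hd.le
  have hPxy : P x y = margX P x * margY P y * ratio P x y := by
    rw [ratio, mul_div_assoc', eq_div_iff hd.ne', mul_comm]
  have hconj : ratio P x y * K x' y' - Φ (ratio P x y) ≤ conj Φ (K x' y') :=
    le_csSup (hK x' y') ⟨_, hr, rfl⟩
  rw [hPxy]
  nlinarith [mul_le_mul_of_nonneg_left hconj hd.le]
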